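/- Let G be a c-uniform hypergraph on V = {1,…,n}, let α̃ > 0 and τ ∈ ℕ, let S ⊆ V with |S| + 1 ≤ τ, and suppose that for every i ∈ V, every set in 𝒮'(S ∪ {i}) has size at most τ/10. Write S^i_max = S'_max(S ∪ {i}). Then for every i ∈ V such that some hyperedge of E(S^i_max) contains i, every vertex j ∈ S^i_max ∖ S is contained in some hyperedge of E(S^i_max); that is, no vertex outside of S is isolated in the subhypergraph E(S^i_max). -/
import Mathlib


open Finset
open scoped Classical

/-- Φ(S) = α̃ |E(S)| − |S|, where E(S) is the set of hyperedges of `G` contained in `S`. -/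
noncomputable def Phi (n : ℕ) (G : Finset (Finset (Fin n))) (αt : ℝ)
    (S : Finset (Fin n)) : ℝ :=
  αt * ((G.filter fun e => e ⊆ S).card : ℝ) - S.card

/-- Φ°(S): the maximum of Φ over candidate sets `S'` for `S` (sets with
`S ⊆ S'` and `|S'| ≤ τ`). -/
noncomputable def PhiOpt (n : ℕ) (G : Finset (Finset (Fin n))) (αt : ℝ) (τ : ℕ)
    (S : Finset (Fin n)) : ℝ :=
  sSup {x : ℝ | ∃ S' : Finset (Fin n), S ⊆ S' ∧ S'.card ≤ τ ∧ x = Phi n G αt S'}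

/-- 𝒮'(S): the collection of candidate sets for `S` attaining `Φ°(S)`. -/
def OptSets (n : ℕ) (G : Finset (Finset (Fin n))) (αt : ℝ) (τ : ℕ)
    (S : Finset (Fin n)) : Set (Finset (Fin n)) :=
  {S' | S ⊆ S' ∧ S'.card ≤ τ ∧ Phi n G αt S' = PhiOpt n G αt τ S}

/-- S'_max(S): the union of all sets in 𝒮'(S). -/
noncomputable def Smax (n : ℕ) (G : Finset (Finset (Fin n))) (αt : ℝ) (τ : ℕ)
    (S : Finset (Fin n)) : Finset (Fin n) :=
  (Finset.univ.filter fun S' => S' ∈ OptSets n G αt τ S).sup id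

lemma phiSet_eq (n : ℕ) (G : Finset (Finset (Fin n))) (αt : ℝ) (τ : ℕ)
    (A : Finset (Fin n)) :
    {x : ℝ | ∃ S' : Finset (Fin n), A ⊆ S' ∧ S'.card ≤ τ ∧ x = Phi n G αt S'}
      = ↑(Finset.image (Phi n G αt)
          (Finset.univ.filter fun S' => A ⊆ S' ∧ S'.card ≤ τ)) := by
  ext x
  simp only [Set.mem_setOf_eq, Finset.coe_image, Set.mem_image, Finset.mem_coe,
    Finset.mem_filter, Finset.mem_univ, true_and]
  constructor
  · rintro ⟨S', h1, h2, rfl⟩; exact ⟨S', ⟨h1, h2⟩, rfl⟩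
  · rintro ⟨S', ⟨h1, h2⟩, rfl⟩; exact ⟨S', h1, h2, rfl⟩

lemma phi_le_opt (n : ℕ) (G : Finset (Finset (Fin n))) (αt : ℝ) (τ : ℕ)
    (A S' : Finset (Fin n)) (h1 : A ⊆ S') (h2 : S'.card ≤ τ) :
    Phi n G αt S' ≤ PhiOpt n G αt τ A := by
  apply le_csSup
  · rw [phiSet_eq]; exact Finset.bddAbove _
  · exact ⟨S', h1, h2, rfl⟩

lemma exists_opt (n : ℕ) (G : Finset (Finset (Fin n))) (αt : ℝ) (τ : ℕ)
    (A : Finset (Fin n)) (hA : A.card ≤ τ) :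
    ∃ T, T ∈ OptSets n G αt τ A := by
  have hne : {x : ℝ | ∃ S' : Finset (Fin n), A ⊆ S' ∧ S'.card ≤ τ ∧ x = Phi n G αt S'}.Nonempty :=
    ⟨Phi n G αt A, A, Finset.Subset.refl A, hA, rfl⟩
  have hfin : {x : ℝ | ∃ S' : Finset (Fin n), A ⊆ S' ∧ S'.card ≤ τ ∧ x = Phi n G αt S'}.Finite := by
    rw [phiSet_eq]; exact Finset.finite_toSet _
  have := hne.csSup_mem hfin
  obtain ⟨T, h1, h2, h3⟩ := this
  exact ⟨T, h1, h2, h3.symm⟩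

lemma supermodular (n : ℕ) (G : Finset (Finset (Fin n))) (αt : ℝ) (hαt : 0 < αt)
    (S1 S2 : Finset (Fin n)) :
    Phi n G αt S1 + Phi n G αt S2 ≤ Phi n G αt (S1 ∪ S2) + Phi n G αt (S1 ∩ S2) := by
  set E1 := G.filter fun e => e ⊆ S1
  set E2 := G.filter fun e => e ⊆ S2
  set EU := G.filter fun e => e ⊆ S1 ∪ S2
  set EI := G.filter fun e => e ⊆ S1 ∩ S2
  have hcard : (S1 ∪ S2).card + (S1 ∩ S2).card = S1.card + S2.card :=
    Finset.card_union_add_card_inter S1 S2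
  have hsub : E1 ∪ E2 ⊆ EU := by
    intro e he
    rcases Finset.mem_union.mp he with h | h <;>
      simp only [E1, E2, EU, Finset.mem_filter] at h ⊢ <;>
      exact ⟨h.1, h.2.trans (by simp)⟩
  have hint : E1 ∩ E2 = EI := by
    ext e
    simp only [E1, E2, EI, Finset.mem_inter, Finset.mem_filter, Finset.subset_inter_iff]
    tauto
  have hE : E1.card + E2.card ≤ EU.card + EI.card := by
    have := Finset.card_union_add_card_inter E1 E2
    rw [hint] at this
    have h2 := Finset.card_le_card hsub
    omega
  have hE' : αt * ((E1.card : ℝ) + E2.card) ≤ αt * ((EU.card : ℝ) + EI.card) := by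
    apply mul_le_mul_of_nonneg_left _ hαt.le
    push_cast
    exact_mod_cast hE
  have hcard' : ((S1 ∪ S2).card : ℝ) + (S1 ∩ S2).card = (S1.card : ℝ) + S2.card := by
    exact_mod_cast hcard
  simp only [Phi]
  nlinarith [hE', hcard']

lemma union_closed (n : ℕ) (G : Finset (Finset (Fin n))) (αt : ℝ) (hαt : 0 < αt)
    (τ : ℕ) (A : Finset (Fin n))
    (h2 : ∀ S' ∈ OptSets n G αt τ A, (S'.card : ℝ) ≤ (τ : ℝ) / 10)
    (S1 S2 : Finset (Fin n)) (h1 : S1 ∈ OptSets n G αt τ A) (hs2 : S2 ∈ OptSets n G αt τ A) :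
    S1 ∪ S2 ∈ OptSets n G αt τ A := by
  obtain ⟨ha1, hc1, hp1⟩ := h1
  obtain ⟨ha2, hc2, hp2⟩ := hs2
  have hcardU : (S1 ∪ S2).card ≤ τ := by
    have : ((S1 ∪ S2).card : ℝ) ≤ (τ : ℝ) := by
      have h3 := h2 S1 ⟨ha1, hc1, hp1⟩
      have h4 := h2 S2 ⟨ha2, hc2, hp2⟩
      have h5 : (S1 ∪ S2).card ≤ S1.card + S2.card := Finset.card_union_le S1 S2
      have h5' : ((S1 ∪ S2).card : ℝ) ≤ (S1.card : ℝ) + S2.card := by exact_mod_cast h5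
      linarith
    exact_mod_cast this
  have hU : Phi n G αt (S1 ∪ S2) ≤ PhiOpt n G αt τ A :=
    phi_le_opt n G αt τ A _ (ha1.trans Finset.subset_union_left) hcardU
  have hI : Phi n G αt (S1 ∩ S2) ≤ PhiOpt n G αt τ A :=
    phi_le_opt n G αt τ A _ (Finset.subset_inter ha1 ha2)
      (le_trans (Finset.card_le_card Finset.inter_subset_left) hc1)
  have hsm := supermodular n G αt hαt S1 S2
  refine ⟨ha1.trans Finset.subset_union_left, hcardU, ?_⟩
  rw [hp1, hp2] at hsm
  linarith

lemma smax_mem (n : ℕ) (G : Finset (Finset (Fin n))) (αt : ℝ) (hαt : 0 < αt)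
    (τ : ℕ) (A : Finset (Fin n)) (hA : A.card ≤ τ)
    (h2 : ∀ S' ∈ OptSets n G αt τ A, (S'.card : ℝ) ≤ (τ : ℝ) / 10) :
    Smax n G αt τ A ∈ OptSets n G αt τ A := by
  obtain ⟨T, hT⟩ := exists_opt n G αt τ A hA
  have hne : (Finset.univ.filter fun S' => S' ∈ OptSets n G αt τ A).Nonempty :=
    ⟨T, by simp [hT]⟩
  rw [Smax, ← Finset.sup'_eq_sup hne]
  apply Finset.sup'_mem (OptSets n G αt τ A)
  · intro x hx y hy
    exact union_closed n G αt hαt τ A h2 x y hx hy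
  · intro i hi
    simpa using hi

theorem stmt14 (n c : ℕ) (G : Finset (Finset (Fin n))) (hG : ∀ e ∈ G, e.card = c)
    (αt : ℝ) (hαt : 0 < αt) (τ : ℕ) (S : Finset (Fin n)) (hS : S.card + 1 ≤ τ)
    (h2 : ∀ i : Fin n, ∀ S' ∈ OptSets n G αt τ (insert i S),
      (S'.card : ℝ) ≤ (τ : ℝ) / 10) :
    ∀ i : Fin n,
      -- some hyperedge of E(S^i_max) contains i
      (∃ e ∈ G.filter fun e => e ⊆ Smax n G αt τ (insert i S), i ∈ e) →
      -- then no vertex outside of S is isolated in E(S^i_max)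
      ∀ j ∈ Smax n G αt τ (insert i S) \ S,
        ∃ e ∈ G.filter fun e => e ⊆ Smax n G αt τ (insert i S), j ∈ e := by

  intro i hi j hj
  set A := insert i S with hA_def
  have hA : A.card ≤ τ := le_trans (Finset.card_insert_le i S) hS
  set T := Smax n G αt τ A with hT_def
  have hTopt : T ∈ OptSets n G αt τ A := smax_mem n G αt hαt τ A hA (h2 i)
  obtain ⟨hAT, hTc, hTphi⟩ := hTopt
  rw [Finset.mem_sdiff] at hj
  by_cases hji : j = i
  · obtain ⟨e, he, hie⟩ := hi
    exact ⟨e, he, hji ▸ hie⟩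
  · by_contra hcon
    push_neg at hcon
    have hjA : j ∉ A := by
      simp only [hA_def, Finset.mem_insert]
      push_neg
      exact ⟨hji, hj.2⟩
    set T' := T.erase j with hT'_def
    have hAT' : A ⊆ T' := fun x hx =>
      Finset.mem_erase.mpr ⟨fun h => hjA (h ▸ hx), hAT hx⟩
    have hT'c : T'.card ≤ τ := le_trans (Finset.card_le_card (Finset.erase_subset j T)) hTc
    have hEeq : G.filter (fun e => e ⊆ T') = G.filter (fun e => e ⊆ T) := by
      ext e
      simp only [Finset.mem_filter]
      constructor
      · rintro ⟨hg, hsub⟩; exact ⟨hg, hsub.trans (Finset.erase_subset j T)⟩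
      · rintro ⟨hg, hsub⟩
        refine ⟨hg, fun x hx => Finset.mem_erase.mpr ⟨?_, hsub hx⟩⟩
        rintro rfl
        exact hcon e (Finset.mem_filter.mpr ⟨hg, hsub⟩) hx
    have hjT : j ∈ T := hj.1
    have hcardT' : (T'.card : ℝ) = (T.card : ℝ) - 1 := by
      rw [hT'_def, Finset.card_erase_of_mem hjT]
      have : 1 ≤ T.card := Finset.card_pos.mpr ⟨j, hjT⟩
      push_cast [Nat.cast_sub this]
      ring
    have hPhiT' : Phi n G αt T' = Phi n G αt T + 1 := by
      simp only [Phi, hEeq, hcardT']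
      ring
    have hle : Phi n G αt T' ≤ PhiOpt n G αt τ A := phi_le_opt n G αt τ A T' hAT' hT'c
    rw [hPhiT', hTphi] at hle
    linarith
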